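/- For a Banach space X, the set of strictly convex bodies is dense in the set of all convex bodies (with the Hausdorff metric) if and only if X admits an equivalent strictly convex norm. -/

import Mathlib

open Set Filter Metric Topology

/-- The collection of convex bodies of `X`. -/
def ConvexBodies (X : Type*) [NormedAddCommGroup X] [NormedSpace ℝ X] : Set (Set X) :=
  {B | B.Nonempty ∧ Bornology.IsBounded B ∧ IsClosed B ∧ Convex ℝ B ∧
    (interior B).Nonempty}

/-- A convex body is strictly convex if every boundary point is an extreme point. -/
def IsStrictlyConvexBody {X : Type*} [NormedAddCommGroup X] [NormedSpace ℝ X]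
    (B : Set X) : Prop :=
  ∀ x ∈ frontier B, x ∈ Set.extremePoints ℝ B

/-- `p` is an equivalent strictly convex norm on `X`. -/
def IsEquivStrictlyConvexNorm {X : Type*} [NormedAddCommGroup X] [NormedSpace ℝ X]
    (p : X → ℝ) : Prop :=
  (∀ x, p x = 0 ↔ x = 0) ∧ (∀ (a : ℝ) (x : X), p (a • x) = |a| * p x) ∧
    (∀ x y, p (x + y) ≤ p x + p y) ∧
    (∃ a b : ℝ, 0 < a ∧ 0 < b ∧ ∀ x, a * ‖x‖ ≤ p x ∧ p x ≤ b * ‖x‖) ∧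
    IsStrictlyConvexBody {z : X | p z ≤ 1}

section Aux
variable {X : Type*} [NormedAddCommGroup X] [NormedSpace ℝ X]

lemma extremePoints_of_subset {E B : Set X} (hEB : E ⊆ B) {x : X} (hx : x ∈ E)
    (hxB : x ∈ Set.extremePoints ℝ B) : x ∈ Set.extremePoints ℝ E :=
  ⟨hx, fun y hy z hz hseg => hxB.2 (hEB hy) (hEB hz) hseg⟩

lemma IsStrictlyConvexBody.inter {D E : Set X} (hD : IsClosed D) (hE : IsClosed E)
    (h1 : IsStrictlyConvexBody D) (h2 : IsStrictlyConvexBody E) :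
    IsStrictlyConvexBody (D ∩ E) := by
  intro x hx
  have hxm : x ∈ D ∩ E := (hD.inter hE).closure_subset hx.1
  rcases frontier_inter_subset D E hx with h | h
  · exact extremePoints_of_subset inter_subset_left hxm (h1 x h.1)
  · exact extremePoints_of_subset inter_subset_right hxm (h2 x h.2)

lemma IsStrictlyConvexBody.neg {D : Set X} (h : IsStrictlyConvexBody D) :
    IsStrictlyConvexBody (-D) := by
  intro x hx
  have hfr : -x ∈ frontier D := by
    have hpre : frontier (-D : Set X) = Neg.neg ⁻¹' (frontier D) :=
      ((Homeomorph.neg X).preimage_frontier D).symm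
    have := hx
    rw [hpre] at this
    exact this
  obtain ⟨hmem, hext⟩ := h (-x) hfr
  refine ⟨Set.mem_neg.mpr hmem, ?_⟩
  rintro y hy z hz ⟨a, b, ha, hb, hab, hseg⟩
  have hseg' : a • (-y) + b • (-z) = -x := by
    rw [smul_neg, smul_neg, ← neg_add, hseg]
  have := hext (Set.mem_neg.mp hy) (Set.mem_neg.mp hz) ⟨a, b, ha, hb, hab, hseg'⟩
  exact neg_injective this

lemma IsStrictlyConvexBody.translate {D : Set X} (h : IsStrictlyConvexBody D) (v : X) :
    IsStrictlyConvexBody ((fun y => v + y) '' D) := by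
  intro x hx
  have himg : (fun y => v + y) '' D = (Homeomorph.addLeft v) '' D := rfl
  have hfr : x ∈ (fun y => v + y) '' (frontier D) := by
    rw [show (fun y => v + y) '' (frontier D) = (Homeomorph.addLeft v) '' (frontier D) from rfl,
      (Homeomorph.addLeft v).image_frontier, ← himg]
    exact hx
  obtain ⟨d, hd, rfl⟩ := hfr
  obtain ⟨hmem, hext⟩ := h d hd
  refine ⟨⟨d, hmem, rfl⟩, ?_⟩
  rintro y ⟨y', hy', rfl⟩ z ⟨z', hz', rfl⟩ ⟨a, b, ha, hb, hab, hseg⟩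
  have hseg' : a • y' + b • z' = d := by
    have : a • (v + y') + b • (v + z') = v + (a • y' + b • z') := by
      rw [smul_add, smul_add]
      rw [show a • v + a • y' + (b • v + b • z') = (a • v + b • v) + (a • y' + b • z') by abel,
        ← add_smul, hab, one_smul]
    rw [this] at hseg
    exact add_left_cancel hseg
  have := hext hy' hz' ⟨a, b, ha, hb, hab, hseg'⟩
  exact congrArg (fun y => v + y) this

lemma isBounded_translate {s : Set X} (hs : Bornology.IsBounded s) (v : X) :
    Bornology.IsBounded ((fun y => v + y) '' s) := by
  obtain ⟨R, hR⟩ := hs.subset_closedBall 0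
  refine (Metric.isBounded_closedBall (x := v) (r := R)).subset ?_
  rintro x ⟨y, hy, rfl⟩
  have : dist (v + y) v = ‖y‖ := by simp [dist_eq_norm]
  simp only [Metric.mem_closedBall, this]
  simpa using hR hy

end Aux

lemma sq_combo_eq {a b u v : ℝ} (hab : a + b = 1) :
    (a*u + b*v)^2 = a*u^2 + b*v^2 - a*b*(u-v)^2 := by
  have hb : b = 1 - a := by linarith
  subst hb; ring

lemma aux_one_sub {δ : ℝ} (h1 : 0 < δ) (h2 : δ ≤ 1/2) :
    (1-δ)^2 + (1-δ)^2 * δ ≤ 1 := by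
  nlinarith [h1, h2, mul_pos h1 h1]

lemma aux_Y_eq_zero {A Xv Y lam : ℝ} (hA : 0 < A) (hlam : 0 < lam) (hX : 0 ≤ Xv)
    (hY : 0 ≤ Y) (h : A * Xv + lam * (A * Y) ≤ 0) : Y = 0 := by
  nlinarith [mul_pos hlam hA, mul_nonneg hA.le hX]

lemma main_construction {X : Type*} [NormedAddCommGroup X] [NormedSpace ℝ X]
    {p : X → ℝ} (hp : IsEquivStrictlyConvexNorm p)
    {B : Set X} (hB0 : (0:X) ∈ interior B) (hBb : Bornology.IsBounded B)
    (hBc : IsClosed B) (hBconv : Convex ℝ B) {ε : ℝ} (hε : 0 < ε) :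
    ∃ D ∈ ConvexBodies X, IsStrictlyConvexBody D ∧ Metric.hausdorffDist B D < ε := by
  obtain ⟨hp0, hph, hpt, ⟨a, b, hapos, hbpos, hpab⟩, hpsc⟩ := hp
  have hpnn : ∀ x, 0 ≤ p x := fun x => le_trans (by positivity) (hpab x).1
  have hp0' : p 0 = 0 := (hp0 0).mpr rfl
  -- gauge setup
  have hBnhds : B ∈ 𝓝 (0:X) := mem_interior_iff_mem_nhds.mp hB0
  have hBabs : Absorbent ℝ B := absorbent_nhds_zero hBnhds
  set g := gauge B with hgdef
  have hgcont : Continuous g := continuous_gauge hBconv hBnhds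
  have hgnn : ∀ x, 0 ≤ g x := fun x => gauge_nonneg x
  have hgmem : ∀ x ∈ B, g x ≤ 1 := fun x hx => gauge_le_one_of_mem hx
  have hmemg : ∀ x, g x ≤ 1 → x ∈ B := by
    intro x hx
    have := (gauge_le_one_iff_mem_closure hBconv hBnhds).mp hx
    rwa [hBc.closure_eq] at this
  obtain ⟨R, hRpos, hBR⟩ : ∃ R : ℝ, 0 < R ∧ B ⊆ closedBall 0 R := by
    obtain ⟨R₀, hR₀⟩ := hBb.subset_closedBall 0
    exact ⟨max R₀ 1, lt_of_lt_of_le one_pos (le_max_right _ _),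
      hR₀.trans (closedBall_subset_closedBall (le_max_left _ _))⟩
  obtain ⟨C, hCpos, hpC⟩ : ∃ C : ℝ, 0 < C ∧ ∀ y ∈ B, p y ≤ C := by
    refine ⟨b * R, mul_pos hbpos hRpos, fun y hy => ?_⟩
    have h1 : ‖y‖ ≤ R := by simpa using hBR hy
    have := (hpab y).2
    nlinarith
  obtain ⟨δ, hδpos, hδhalf, hδR⟩ :
      ∃ δ : ℝ, 0 < δ ∧ δ ≤ 1/2 ∧ δ * R ≤ ε / 2 := by
    refine ⟨min (1/2 : ℝ) (ε / (2 * R)), lt_min (by norm_num) (by positivity),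
      min_le_left _ _, ?_⟩
    have h1 : min (1/2 : ℝ) (ε / (2 * R)) ≤ ε / (2 * R) := min_le_right _ _
    have h2 : min (1/2 : ℝ) (ε / (2 * R)) * R ≤ (ε / (2*R)) * R := by nlinarith
    calc min (1/2 : ℝ) (ε / (2 * R)) * R ≤ (ε / (2*R)) * R := h2
      _ = ε / 2 := by field_simp
  obtain ⟨lam, hlampos, hlamC⟩ : ∃ lam : ℝ, 0 < lam ∧ lam * C^2 = δ := by
    refine ⟨δ / C^2, by positivity, by field_simp⟩
  have hpcont : Continuous p := by
    have hlip : LipschitzWith b.toNNReal p := by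
      apply LipschitzWith.of_dist_le_mul
      intro x y
      rw [Real.dist_eq, dist_eq_norm, Real.coe_toNNReal b hbpos.le]
      have h1 : p x ≤ p y + p (x - y) := by
        have := hpt y (x - y); rwa [add_sub_cancel] at this
      have h2 : p y ≤ p x + p (x - y) := by
        have h3 := hpt x (y - x)
        rw [add_sub_cancel] at h3
        have h4 : p (y - x) = p (x - y) := by
          have : y - x = (-1 : ℝ) • (x - y) := by simp [neg_sub]
          rw [this, hph]; norm_num
        linarith
      have h5 : p (x - y) ≤ b * ‖x - y‖ := (hpab _).2
      rw [abs_le]; constructor <;> linarith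
    exact hlip.continuous
  have hqcont : Continuous (fun z : X => (g z)^2 + lam * (p z)^2) :=
    (hgcont.pow 2).add (continuous_const.mul (hpcont.pow 2))
  set D := {z : X | (g z)^2 + lam * (p z)^2 ≤ 1} with hDdef
  have hDclosed : IsClosed D := by
    rw [hDdef]; exact isClosed_le hqcont continuous_const
  have hq0 : (g (0:X))^2 + lam * (p 0)^2 = 0 := by
    simp [hgdef, gauge_zero, hp0']
  have h0D : (0:X) ∈ D := by
    simp only [hDdef, mem_setOf_eq, hq0]; norm_num
  have hDB : D ⊆ B := by
    intro z hz
    apply hmemg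
    simp only [hDdef, mem_setOf_eq] at hz
    have h2 : 0 ≤ lam * (p z)^2 := by positivity
    have h3 : (g z)^2 ≤ 1 := by linarith
    nlinarith [hgnn z]
  have hsub : {z : X | (g z)^2 + lam * (p z)^2 < 1} ⊆ D := by
    intro z hz
    simp only [mem_setOf_eq] at hz
    simp only [hDdef, mem_setOf_eq]
    exact hz.le
  have hDint : (0:X) ∈ interior D :=
    mem_interior.mpr ⟨{z : X | (g z)^2 + lam * (p z)^2 < 1}, hsub,
      isOpen_lt hqcont continuous_const, by simp only [mem_setOf_eq, hq0]; norm_num⟩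
  -- subadditivity combos
  have hgcomb : ∀ (a' b' : ℝ) (y z : X), 0 ≤ a' → 0 ≤ b' →
      g (a' • y + b' • z) ≤ a' * g y + b' * g z := by
    intro a' b' y z ha' hb'
    calc g (a' • y + b' • z) ≤ g (a' • y) + g (b' • z) := gauge_add_le hBconv hBabs _ _
      _ = a' * g y + b' * g z := by
          rw [hgdef, gauge_smul_of_nonneg ha', gauge_smul_of_nonneg hb', smul_eq_mul, smul_eq_mul]
  have hpcomb : ∀ (a' b' : ℝ) (y z : X), 0 ≤ a' → 0 ≤ b' →
      p (a' • y + b' • z) ≤ a' * p y + b' * p z := by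
    intro a' b' y z ha' hb'
    calc p (a' • y + b' • z) ≤ p (a' • y) + p (b' • z) := hpt _ _
      _ = a' * p y + b' * p z := by
          rw [hph, hph, abs_of_nonneg ha', abs_of_nonneg hb']
  have hDconv : Convex ℝ D := by
    intro y hy z hz a' b' ha' hb' hab'
    simp only [hDdef, mem_setOf_eq] at hy hz ⊢
    have hy' : (g y)^2 + lam * (p y)^2 ≤ 1 := hy
    have hz' : (g z)^2 + lam * (p z)^2 ≤ 1 := hz
    have h1 := hgcomb a' b' y z ha' hb'
    have h2 := hpcomb a' b' y z ha' hb'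
    have hU0 : 0 ≤ a' * g y + b' * g z :=
      add_nonneg (mul_nonneg ha' (hgnn y)) (mul_nonneg hb' (hgnn z))
    have hV0 : 0 ≤ a' * p y + b' * p z :=
      add_nonneg (mul_nonneg ha' (hpnn y)) (mul_nonneg hb' (hpnn z))
    have h3 : (g (a' • y + b' • z))^2 ≤ (a' * g y + b' * g z)^2 :=
      pow_le_pow_left₀ (hgnn _) h1 2
    have h4 : (p (a' • y + b' • z))^2 ≤ (a' * p y + b' * p z)^2 :=
      pow_le_pow_left₀ (hpnn _) h2 2
    have h5 := sq_combo_eq (u := g y) (v := g z) hab'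
    have h6 := sq_combo_eq (u := p y) (v := p z) hab'
    have h7 : lam * (p (a' • y + b' • z))^2 ≤ lam * (a' * p y + b' * p z)^2 :=
      mul_le_mul_of_nonneg_left h4 hlampos.le
    have h9 := mul_le_mul_of_nonneg_left hy' ha'
    have h10 := mul_le_mul_of_nonneg_left hz' hb'
    have hEq : (a' * g y + b' * g z)^2 + lam * (a' * p y + b' * p z)^2
        = a' * ((g y)^2 + lam * (p y)^2) + b' * ((g z)^2 + lam * (p z)^2)
          - (a' * b' * (g y - g z)^2 + lam * (a' * b' * (p y - p z)^2)) := by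
      rw [h5, h6]; ring
    have hn1 : 0 ≤ a' * b' * (g y - g z)^2 :=
      mul_nonneg (mul_nonneg ha' hb') (sq_nonneg _)
    have hn2 : 0 ≤ lam * (a' * b' * (p y - p z)^2) :=
      mul_nonneg hlampos.le (mul_nonneg (mul_nonneg ha' hb') (sq_nonneg _))
    linarith
  -- Hausdorff distance
  have hscale : ∀ y ∈ B, (1 - δ) • y ∈ D := by
    intro y hy
    simp only [hDdef, mem_setOf_eq]
    show (g ((1-δ) • y))^2 + lam * (p ((1-δ) • y))^2 ≤ 1
    have h1 : g ((1-δ) • y) = (1-δ) * g y := by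
      rw [hgdef, gauge_smul_of_nonneg (by linarith : (0:ℝ) ≤ 1-δ), smul_eq_mul]
    have h2 : p ((1-δ) • y) = (1-δ) * p y := by
      rw [hph, abs_of_nonneg (by linarith : (0:ℝ) ≤ 1-δ)]
    have h3 : g y ≤ 1 := hgmem y hy
    have h4 : p y ≤ C := hpC y hy
    have h5 : (g y)^2 ≤ 1 := by
      simpa using pow_le_pow_left₀ (hgnn y) h3 2
    have h6 : (p y)^2 ≤ C^2 := pow_le_pow_left₀ (hpnn y) h4 2
    have h7 : lam * (p y)^2 ≤ δ := by
      calc lam * (p y)^2 ≤ lam * C^2 := mul_le_mul_of_nonneg_left h6 hlampos.le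
        _ = δ := hlamC
    rw [h1, h2]
    have h8 : ((1-δ) * g y)^2 ≤ (1-δ)^2 := by
      have h8' : (1-δ) * g y ≤ (1-δ) := by
        have := mul_le_mul_of_nonneg_left h3 (by linarith : (0:ℝ) ≤ 1-δ)
        simpa using this
      simpa using pow_le_pow_left₀ (mul_nonneg (by linarith) (hgnn y)) h8' 2
    have h9 : lam * ((1-δ) * p y)^2 = (1-δ)^2 * (lam * (p y)^2) := by ring
    have h10 : (1-δ)^2 * (lam * (p y)^2) ≤ (1-δ)^2 * δ :=
      mul_le_mul_of_nonneg_left h7 (sq_nonneg _)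
    have h11 : (1-δ)^2 + (1-δ)^2 * δ ≤ 1 := aux_one_sub hδpos hδhalf
    linarith
  have hdist : Metric.hausdorffDist B D < ε := by
    have hle : Metric.hausdorffDist B D ≤ δ * R := by
      apply hausdorffDist_le_of_mem_dist (by positivity)
      · intro x hx
        refine ⟨(1-δ) • x, hscale x hx, ?_⟩
        have he : x - (1-δ) • x = δ • x := by
          rw [sub_smul, one_smul]; abel
        rw [dist_eq_norm, he, norm_smul, Real.norm_eq_abs, abs_of_nonneg hδpos.le]
        have hxR : ‖x‖ ≤ R := by simpa using hBR hx
        exact mul_le_mul_of_nonneg_left hxR hδpos.le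
      · intro y hy
        refine ⟨y, hDB hy, ?_⟩
        simp only [dist_self]
        positivity
    linarith
  -- frontier of D
  have hfrq : ∀ x ∈ frontier D, (g x)^2 + lam * (p x)^2 = 1 := by
    intro x hx
    have hxD : x ∈ D := hDclosed.closure_subset hx.1
    simp only [hDdef, mem_setOf_eq] at hxD
    by_contra hne
    have hlt : (g x)^2 + lam * (p x)^2 < 1 := lt_of_le_of_ne hxD hne
    exact hx.2 (mem_interior.mpr ⟨{z : X | (g z)^2 + lam * (p z)^2 < 1}, hsub,
      isOpen_lt hqcont continuous_const, hlt⟩)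
  -- frontier of P
  have hfrontP : ∀ m : X, p m = 1 → m ∈ frontier {z : X | p z ≤ 1} := by
    intro m hm
    constructor
    · exact subset_closure (by simp [hm])
    · intro hmem
      rw [mem_interior_iff_mem_nhds, Metric.mem_nhds_iff] at hmem
      obtain ⟨r, hr, hball⟩ := hmem
      have hm0 : m ≠ 0 := by
        intro h; rw [h, hp0'] at hm; norm_num at hm
      have hnm : 0 < ‖m‖ := norm_pos_iff.mpr hm0
      set t := r / (2 * ‖m‖) with htdef
      have htpos : 0 < t := by positivity
      have hmem' : (1 + t) • m ∈ {z : X | p z ≤ 1} := by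
        apply hball
        simp only [mem_ball, dist_eq_norm]
        have he : (1+t) • m - m = t • m := by
          rw [add_smul, one_smul]; abel
        rw [he, norm_smul, Real.norm_eq_abs, abs_of_nonneg htpos.le]
        have hte : t * ‖m‖ = r / 2 := by
          rw [htdef]; field_simp
        rw [hte]; linarith
      have hp' : p ((1+t) • m) = 1 + t := by
        rw [hph, hm, abs_of_nonneg (by linarith), mul_one]
      simp only [mem_setOf_eq, hp'] at hmem'
      linarith
  -- strict convexity of D
  have hsc : IsStrictlyConvexBody D := by
    intro x hx
    have hxD : x ∈ D := hDclosed.closure_subset hx.1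
    have hqx : (g x)^2 + lam * (p x)^2 = 1 := hfrq x hx
    refine ⟨hxD, ?_⟩
    rintro y hy z hz ⟨a', b', ha', hb', hab', hseg⟩
    simp only [hDdef, mem_setOf_eq] at hy hz
    have hy' : (g y)^2 + lam * (p y)^2 ≤ 1 := hy
    have hz' : (g z)^2 + lam * (p z)^2 ≤ 1 := hz
    have h1 : g x ≤ a' * g y + b' * g z := by
      rw [← hseg]; exact hgcomb a' b' y z ha'.le hb'.le
    have h2 : p x ≤ a' * p y + b' * p z := by
      rw [← hseg]; exact hpcomb a' b' y z ha'.le hb'.le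
    have hU0 : 0 ≤ a' * g y + b' * g z :=
      add_nonneg (mul_nonneg ha'.le (hgnn y)) (mul_nonneg hb'.le (hgnn z))
    have hV0 : 0 ≤ a' * p y + b' * p z :=
      add_nonneg (mul_nonneg ha'.le (hpnn y)) (mul_nonneg hb'.le (hpnn z))
    have hu2 : (g x)^2 ≤ (a' * g y + b' * g z)^2 := pow_le_pow_left₀ (hgnn x) h1 2
    have hv2 : (p x)^2 ≤ (a' * p y + b' * p z)^2 := pow_le_pow_left₀ (hpnn x) h2 2
    have hid1 := sq_combo_eq (u := g y) (v := g z) hab'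
    have hid2 := sq_combo_eq (u := p y) (v := p z) hab'
    have hkey : (1:ℝ) ≤ (a' * g y + b' * g z)^2 + lam * (a' * p y + b' * p z)^2 := by
      have h7 : lam * (p x)^2 ≤ lam * (a' * p y + b' * p z)^2 :=
        mul_le_mul_of_nonneg_left hv2 hlampos.le
      linarith
    have h9 := mul_le_mul_of_nonneg_left hy' ha'.le
    have h10 := mul_le_mul_of_nonneg_left hz' hb'.le
    have hEq : (a' * g y + b' * g z)^2 + lam * (a' * p y + b' * p z)^2
        = a' * ((g y)^2 + lam * (p y)^2) + b' * ((g z)^2 + lam * (p z)^2)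
          - (a' * b' * (g y - g z)^2 + lam * (a' * b' * (p y - p z)^2)) := by
      rw [hid1, hid2]; ring
    have hprod : a' * b' * (g y - g z)^2 + lam * (a' * b' * (p y - p z)^2) ≤ 0 := by
      linarith
    have hpyz : p y = p z := by
      have h0 : (p y - p z)^2 = 0 :=
        aux_Y_eq_zero (mul_pos ha' hb') hlampos (sq_nonneg (g y - g z))
          (sq_nonneg (p y - p z)) hprod
      have h1 := pow_eq_zero_iff (n := 2) two_ne_zero |>.mp h0
      linarith [sub_eq_zero.mp h1]
    have hn1 : 0 ≤ a' * b' * (g y - g z)^2 :=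
      mul_nonneg (mul_nonneg ha'.le hb'.le) (sq_nonneg _)
    have hn2 : 0 ≤ lam * (a' * b' * (p y - p z)^2) :=
      mul_nonneg hlampos.le (mul_nonneg (mul_nonneg ha'.le hb'.le) (sq_nonneg _))
    have hUle : (a' * g y + b' * g z)^2 + lam * (a' * p y + b' * p z)^2 ≤ 1 := by
      linarith
    have hlamV : lam * (a' * p y + b' * p z)^2 ≤ lam * (p x)^2 := by linarith
    have hV2 : (a' * p y + b' * p z)^2 ≤ (p x)^2 :=
      le_of_mul_le_mul_left hlamV hlampos
    have hVle : a' * p y + b' * p z ≤ p x :=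
      (pow_le_pow_iff_left₀ hV0 (hpnn x) two_ne_zero).mp hV2
    have hpx : p x = a' * p y + b' * p z := le_antisymm h2 hVle
    have hpxy : p x = p y := by
      calc p x = a' * p y + b' * p z := hpx
        _ = (a' + b') * p y := by rw [hpyz]; ring
        _ = p y := by rw [hab', one_mul]
    by_cases hc : p y = 0
    · have hy0 : y = 0 := (hp0 y).mp hc
      have hz0 : z = 0 := (hp0 z).mp (by rw [← hpyz]; exact hc)
      have hx0 : x = 0 := by rw [← hseg, hy0, hz0]; simp
      rw [hy0, hx0]
    · have hcpos : 0 < p y := lt_of_le_of_ne (hpnn y) (Ne.symm hc)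
      have hinv : (0:ℝ) < (p y)⁻¹ := inv_pos.mpr hcpos
      have hw1 : p ((p y)⁻¹ • y) = 1 := by
        rw [hph, abs_of_pos hinv]; field_simp
      have hw2 : p ((p y)⁻¹ • z) = 1 := by
        rw [hph, abs_of_pos hinv, ← hpyz]; field_simp
      have hm : p ((p y)⁻¹ • x) = 1 := by
        rw [hph, abs_of_pos hinv, hpxy]; field_simp
      have hmfr := hfrontP _ hm
      have hext := hpsc _ hmfr
      have hseg' : (p y)⁻¹ • x ∈ openSegment ℝ ((p y)⁻¹ • y) ((p y)⁻¹ • z) := by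
        refine ⟨a', b', ha', hb', hab', ?_⟩
        rw [smul_comm a' ((p y)⁻¹) y, smul_comm b' ((p y)⁻¹) z, ← smul_add, hseg]
      have hres := hext.2 (show (p y)⁻¹ • y ∈ {z : X | p z ≤ 1} by
          simp only [mem_setOf_eq, hw1]; norm_num)
        (show (p y)⁻¹ • z ∈ {z : X | p z ≤ 1} by
          simp only [mem_setOf_eq, hw2]; norm_num) hseg'
      have hyx : y = x := smul_right_injective X (ne_of_gt hinv) hres
      exact hyx
  exact ⟨D, ⟨⟨0, h0D⟩, hBb.subset hDB, hDclosed, hDconv, ⟨0, hDint⟩⟩, hsc, hdist⟩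

lemma forward_renorm {X : Type*} [NormedAddCommGroup X] [NormedSpace ℝ X]
    {D : Set X} (hDcl : IsClosed D) (hDconv : Convex ℝ D) (hDsc : IsStrictlyConvexBody D)
    (hball : closedBall (0:X) (1/2) ⊆ D) (hbound : D ⊆ closedBall (0:X) 2) :
    ∃ p : X → ℝ, IsEquivStrictlyConvexNorm p := by
  set E := D ∩ (-D) with hEdef
  have hDnegcl : IsClosed (-D) := hDcl.neg
  have hDnegconv : Convex ℝ (-D) := hDconv.neg
  have hEcl : IsClosed E := hDcl.inter hDnegcl
  have hEconv : Convex ℝ E := hDconv.inter hDnegconv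
  have hEball : closedBall (0:X) (1/2) ⊆ E := by
    intro x hx
    refine ⟨hball hx, ?_⟩
    rw [Set.mem_neg]
    apply hball
    simp only [mem_closedBall, dist_zero_right] at hx ⊢
    simpa using hx
  have hEbound : E ⊆ closedBall (0:X) 2 := fun x hx => hbound hx.1
  have hEnhds : E ∈ 𝓝 (0:X) :=
    Filter.mem_of_superset (Metric.closedBall_mem_nhds 0 (by norm_num)) hEball
  have hEabs : Absorbent ℝ E := absorbent_nhds_zero hEnhds
  have hEsymm : ∀ x ∈ E, -x ∈ E := by
    rintro x ⟨h1, h2⟩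
    exact ⟨Set.mem_neg.mp h2, by rwa [Set.mem_neg, neg_neg]⟩
  have hEvb : Bornology.IsVonNBounded ℝ E :=
    ((NormedSpace.isVonNBounded_closedBall ℝ X 2).subset hEbound)
  have hEsc : IsStrictlyConvexBody E :=
    IsStrictlyConvexBody.inter hDcl hDnegcl hDsc hDsc.neg
  have hset : {z : X | gauge E z ≤ 1} = E := by
    ext z
    simp only [mem_setOf_eq]
    constructor
    · intro hz
      have := (gauge_le_one_iff_mem_closure hEconv hEnhds).mp hz
      rwa [hEcl.closure_eq] at this
    · exact fun hz => gauge_le_one_of_mem hz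
  refine ⟨gauge E, fun x => gauge_eq_zero hEabs hEvb, ?_, gauge_add_le hEconv hEabs, ?_, ?_⟩
  · intro a x
    rcases le_or_gt 0 a with h | h
    · rw [gauge_smul_of_nonneg h, smul_eq_mul, abs_of_nonneg h]
    · have he : a • x = (-a) • (-x) := by rw [neg_smul, smul_neg, neg_neg]
      rw [he, gauge_smul_of_nonneg (by linarith), smul_eq_mul, gauge_neg hEsymm,
        abs_of_neg h]
  · refine ⟨1/2, 2, by norm_num, by norm_num, fun x => ⟨?_, ?_⟩⟩
    · have := le_gauge_of_subset_closedBall hEabs (by norm_num : (0:ℝ) ≤ 2) hEbound (x := x)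
      linarith [this]
    · have h1 : gauge E x ≤ gauge (ball (0:X) (1/2)) x :=
        gauge_mono (absorbent_ball_zero (by norm_num))
          ((ball_subset_closedBall).trans hEball) x
      rw [gauge_ball (by norm_num)] at h1
      linarith
  · rw [hset]
    exact hEsc

lemma dense_implies_renorm {X : Type*} [NormedAddCommGroup X] [NormedSpace ℝ X]
    (h : ∀ B ∈ ConvexBodies X, ∀ ε > (0 : ℝ),
        ∃ D ∈ ConvexBodies X, IsStrictlyConvexBody D ∧ Metric.hausdorffDist B D < ε) :
    ∃ p : X → ℝ, IsEquivStrictlyConvexNorm p := by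
  have hmem : closedBall (0:X) 1 ∈ ConvexBodies X := by
    refine ⟨⟨0, by simp⟩, isBounded_closedBall, isClosed_closedBall, convex_closedBall _ _,
      ⟨0, ball_subset_interior_closedBall (mem_ball_self one_pos)⟩⟩
  obtain ⟨D, ⟨hDne, hDb, hDcl, hDconv, hDint⟩, hDsc, hdist⟩ :=
    h (closedBall 0 1) hmem (1/4) (by norm_num)
  have hedist : Metric.hausdorffEDist (closedBall (0:X) 1) D ≠ ⊤ :=
    hausdorffEdist_ne_top_of_nonempty_of_bounded ⟨0, by simp⟩ hDne
      isBounded_closedBall hDb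
  have hDsub : D ⊆ closedBall (0:X) 2 := by
    intro d hd
    have hd' : Metric.hausdorffDist D (closedBall (0:X) 1) < 1/4 := by
      rw [hausdorffDist_comm]; exact hdist
    obtain ⟨y, hy, hdy⟩ := exists_dist_lt_of_hausdorffDist_lt hd hd'
      (by rwa [Metric.hausdorffEDist_comm] at hedist)
    simp only [mem_closedBall, dist_zero_right] at hy ⊢
    have h1 : dist d 0 ≤ dist d y + dist y 0 := dist_triangle _ _ _
    simp only [dist_zero_right] at h1
    calc ‖d‖ ≤ dist d y + ‖y‖ := by simpa [dist_zero_right] using h1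
      _ ≤ 2 := by linarith
  have hballD : closedBall (0:X) (1/2) ⊆ D := by
    intro x hx
    by_contra hxD
    obtain ⟨f, u, hfd, hfx⟩ := geometric_hahn_banach_closed_point hDconv hDcl hxD
    obtain ⟨d₀, hd₀⟩ := hDne
    have hf0 : f ≠ 0 := by
      intro h0
      rw [h0] at hfd hfx
      have h1 := hfd d₀ hd₀
      simp only [ContinuousLinearMap.zero_apply] at h1 hfx
      linarith
    have hfpos : 0 < ‖f‖ := norm_pos_iff.mpr hf0
    obtain ⟨y, hy1, hy2⟩ := f.exists_lt_apply_of_lt_opNorm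
      (show (15/16)*‖f‖ < ‖f‖ by nlinarith)
    set y' := if 0 ≤ f y then y else -y with hy'def
    have hy'n : ‖y'‖ < 1 := by
      rw [hy'def]; split_ifs
      · exact hy1
      · simpa using hy1
    have hfy' : (15/16)*‖f‖ < f y' := by
      rw [hy'def]; split_ifs with hcase
      · rwa [Real.norm_eq_abs, abs_of_nonneg hcase] at hy2
      · rw [map_neg]
        rw [Real.norm_eq_abs, abs_of_neg (lt_of_not_ge hcase)] at hy2
        linarith
    have hy'B : y' ∈ closedBall (0:X) 1 := by
      simp only [mem_closedBall, dist_zero_right]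
      linarith
    obtain ⟨d, hd, hdd⟩ := exists_dist_lt_of_hausdorffDist_lt hy'B hdist hedist
    have h1 : f y' - f d = f (y' - d) := by rw [map_sub]
    have h2 : f (y' - d) ≤ ‖f‖ * ‖y' - d‖ :=
      le_trans (le_abs_self _) (by simpa [Real.norm_eq_abs] using f.le_opNorm (y' - d))
    have h3 : ‖y' - d‖ < 1/4 := by rwa [← dist_eq_norm]
    have h4 : f x ≤ ‖f‖ * ‖x‖ :=
      le_trans (le_abs_self _) (by simpa [Real.norm_eq_abs] using f.le_opNorm x)
    have h5 : ‖x‖ ≤ 1/2 := by simpa [dist_zero_right] using hx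
    have h6 := hfd d hd
    have h8 : ‖f‖ * ‖y' - d‖ < ‖f‖ * (1/4) := mul_lt_mul_of_pos_left h3 hfpos
    have h9 : ‖f‖ * ‖x‖ ≤ ‖f‖ * (1/2) := mul_le_mul_of_nonneg_left h5 hfpos.le
    linarith
  exact forward_renorm hDcl hDconv hDsc hballD hDsub

/-- **Theorem 1.1.** In a Banach space `X`, the strictly convex bodies
are dense in the set of all convex bodies for the Hausdorff metric iff `X` admits an
equivalent strictly convex norm. -/
theorem strictly_convex_bodies_dense_iff_renorm
    {X : Type*} [NormedAddCommGroup X] [NormedSpace ℝ X] [CompleteSpace X] :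
    (∀ B ∈ ConvexBodies X, ∀ ε > (0 : ℝ),
        ∃ D ∈ ConvexBodies X, IsStrictlyConvexBody D ∧ Metric.hausdorffDist B D < ε) ↔
      ∃ p : X → ℝ, IsEquivStrictlyConvexNorm p := by
  constructor
  · exact dense_implies_renorm
  · rintro ⟨p, hp⟩ B hB ε hε
    obtain ⟨hBne, hBb, hBc, hBconv, x₀, hx₀⟩ := hB
    set B' := (fun y => -x₀ + y) '' B with hB'def
    have hB'img : B' = (Homeomorph.addLeft (-x₀)) '' B := rfl
    have hB'0 : (0:X) ∈ interior B' := by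
      have hint : interior B' = (fun y => -x₀ + y) '' interior B := by
        rw [hB'img, ← (Homeomorph.addLeft (-x₀)).image_interior]
        rfl
      rw [hint]
      exact ⟨x₀, hx₀, by simp⟩
    have hB'b : Bornology.IsBounded B' := isBounded_translate hBb (-x₀)
    have hB'c : IsClosed B' := by
      rw [hB'img]
      exact (Homeomorph.addLeft (-x₀)).isClosedMap _ hBc
    have hB'conv : Convex ℝ B' := hBconv.translate (-x₀)
    obtain ⟨D', hD'cb, hD'sc, hD'dist⟩ := main_construction hp hB'0 hB'b hB'c hB'conv hε
    obtain ⟨⟨d0, hd0⟩, hD'b, hD'c, hD'conv, w, hw⟩ := hD'cb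
    refine ⟨(fun y => x₀ + y) '' D', ?_, hD'sc.translate x₀, ?_⟩
    · refine ⟨⟨x₀ + d0, ⟨d0, hd0, rfl⟩⟩, isBounded_translate hD'b x₀,
        (Homeomorph.addLeft x₀).isClosedMap _ hD'c, hD'conv.translate x₀, ⟨x₀ + w, ?_⟩⟩
      have hint : interior ((fun y => x₀ + y) '' D') = (fun y => x₀ + y) '' interior D' := by
        rw [show (fun y => x₀ + y) '' D' = (Homeomorph.addLeft x₀) '' D' from rfl,
          ← (Homeomorph.addLeft x₀).image_interior]
        rfl
      rw [hint]
      exact ⟨w, hw, rfl⟩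
    · have hiso : Isometry (fun y : X => x₀ + y) :=
        Isometry.of_dist_eq (fun a b => by
          simp [dist_eq_norm, add_sub_add_left_eq_sub])
      have himg : (fun y => x₀ + y) '' B' = B := by
        rw [hB'def, Set.image_image]
        simp
      calc Metric.hausdorffDist B ((fun y => x₀ + y) '' D')
          = Metric.hausdorffDist ((fun y => x₀ + y) '' B') ((fun y => x₀ + y) '' D') := by
            rw [himg]
        _ = Metric.hausdorffDist B' D' := hausdorffDist_image hiso
        _ < ε := hD'dist
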